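/- Let s ≥ 2 and 2 ≤ d ≤ s. Define p^(d)_i = C(s-i, d-1)/C(s, d) for 1 ≤ i ≤ s-d+1 and p^(d)_i = 0 for i ≥ s-d+2. Then for every k with 1 ≤ k ≤ s, Σ_{i=k}^s p^(d)_i ≤ Σ_{i=k}^s p^(2)_i, i.e., p^(d) ⪯_GSC p^(2). -/

import Mathlib

/-- Power-of-d allocation vector: `p^(d)_i = C(s-i, d-1)/C(s, d)` for `i ≤ s-d+1`, else 0. -/
noncomputable def pwVec (s d i : ℕ) : ℝ :=
  if i ≤ s - d + 1 then (Nat.choose (s - i) (d - 1) : ℝ) / (Nat.choose s d : ℝ) else 0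

/-- The `if` in `pwVec` is superfluous: beyond `s-d+1` the binomial coefficient vanishes. -/
lemma pwVec_eq (s d i : ℕ) (hd : 2 ≤ d) (hds : d ≤ s) :
    pwVec s d i = (Nat.choose (s - i) (d - 1) : ℝ) / (Nat.choose s d : ℝ) := by
  unfold pwVec
  split_ifs with h
  · rfl
  · push_neg at h
    have hsi : s - i < d - 1 := by omega
    rw [Nat.choose_eq_zero_of_lt hsi]
    simp

/-- Hockey stick from 0. -/
lemma sum_Icc_zero_choose (n r : ℕ) :
    ∑ j ∈ Finset.Icc 0 n, Nat.choose j r = Nat.choose (n + 1) (r + 1) := by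
  rw [← Nat.sum_Icc_choose n r]
  symm
  apply Finset.sum_subset (Finset.Icc_subset_Icc_left (Nat.zero_le r))
  intro x hx hxn
  simp only [Finset.mem_Icc] at hx hxn
  exact Nat.choose_eq_zero_of_lt (by omega)

/-- Tail-sum identity: `∑_{i=k}^s C(s-i, d-1) = C(s-k+1, d)` (hockey stick). -/
lemma tail_sum (s d k : ℕ) (hd : 2 ≤ d) :
    ∑ i ∈ Finset.Icc k s, Nat.choose (s - i) (d - 1) = Nat.choose (s - k + 1) d := by
  rcases le_or_gt k s with hk | hk
  · have h : ∑ i ∈ Finset.Icc k s, Nat.choose (s - i) (d - 1)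
        = ∑ j ∈ Finset.Icc 0 (s - k), Nat.choose j (d - 1) := by
      apply Finset.sum_nbij' (fun i => s - i) (fun j => s - j)
      · intro i hi; simp only [Finset.mem_Icc] at hi ⊢; omega
      · intro j hj; simp only [Finset.mem_Icc] at hj ⊢; omega
      · intro i hi; simp only [Finset.mem_Icc] at hi; omega
      · intro j hj; simp only [Finset.mem_Icc] at hj; omega
      · intro i hi; rfl
    rw [h, sum_Icc_zero_choose]
    congr 1
    omega
  · rw [Finset.Icc_eq_empty (by omega), Finset.sum_empty]
    have h1 : s - k + 1 = 1 := by omega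
    rw [h1, eq_comm]
    exact Nat.choose_eq_zero_of_lt (by omega)

/-- Key combinatorial inequality: for `m ≤ s` and `2 ≤ d`,
`C(m,d) * C(s,2) ≤ C(m,2) * C(s,d)`. -/
lemma key_ineq (m s d : ℕ) (hms : m ≤ s) (hd2 : 2 ≤ d) :
    Nat.choose m d * Nat.choose s 2 ≤ Nat.choose m 2 * Nat.choose s d := by
  rcases le_or_gt d m with hdm | hdm
  · have hpos : 0 < Nat.choose d 2 := Nat.choose_pos hd2
    apply Nat.le_of_mul_le_mul_right _ hpos
    calc Nat.choose m d * Nat.choose s 2 * Nat.choose d 2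
        = Nat.choose m d * Nat.choose d 2 * Nat.choose s 2 := by ring
      _ = Nat.choose m 2 * Nat.choose (m - 2) (d - 2) * Nat.choose s 2 := by
          rw [Nat.choose_mul (n := m) hd2]
      _ ≤ Nat.choose m 2 * Nat.choose (s - 2) (d - 2) * Nat.choose s 2 := by
          gcongr
      _ = Nat.choose m 2 * (Nat.choose s d * Nat.choose d 2) := by
          rw [Nat.choose_mul (n := s) hd2]; ring
      _ = Nat.choose m 2 * Nat.choose s d * Nat.choose d 2 := by ring
  · rw [Nat.choose_eq_zero_of_lt hdm]
    simp

theorem stmt_2 (s d : ℕ) (hs : 2 ≤ s) (hd2 : 2 ≤ d) (hds : d ≤ s) :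
    ∀ k, 1 ≤ k → k ≤ s →
      ∑ i ∈ Finset.Icc k s, pwVec s d i ≤ ∑ i ∈ Finset.Icc k s, pwVec s 2 i := by
  intro k hk1 hks
  have hsum : ∀ e : ℕ, 2 ≤ e → e ≤ s →
      ∑ i ∈ Finset.Icc k s, pwVec s e i
        = (Nat.choose (s - k + 1) e : ℝ) / (Nat.choose s e : ℝ) := by
    intro e he2 hes
    calc ∑ i ∈ Finset.Icc k s, pwVec s e i
        = ∑ i ∈ Finset.Icc k s, (Nat.choose (s - i) (e - 1) : ℝ) / (Nat.choose s e : ℝ) := by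
          exact Finset.sum_congr rfl fun i _ => pwVec_eq s e i he2 hes
      _ = (Nat.choose (s - k + 1) e : ℝ) / (Nat.choose s e : ℝ) := by
          rw [← tail_sum s e k he2, Nat.cast_sum, Finset.sum_div]
  rw [hsum d hd2 hds, hsum 2 le_rfl hs]
  have hd_pos : (0 : ℝ) < Nat.choose s d := by exact_mod_cast Nat.choose_pos hds
  have h2_pos : (0 : ℝ) < Nat.choose s 2 := by exact_mod_cast Nat.choose_pos hs
  rw [div_le_div_iff₀ hd_pos h2_pos]
  exact_mod_cast key_ineq (s - k + 1) s d (by omega) hd2
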